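/- If a reward machine satisfies the self-loop condition (for all states u, u' and labels σ, δu(u', σ) = u implies δu(u, σ) = u), then the final state reached by processing any trace equals the final state reached by processing its compression. -/
import Mathlib

private lemma destutter'_foldl {U Sigma : Type} [DecidableEq Sigma]
    (δu : U → Sigma → U)
    (hself : ∀ (u u' : U) (σ : Sigma), δu u' σ = u → δu u σ = u) :
    ∀ (l : List Sigma) (a : Sigma) (u : U),
      (List.destutter' (· ≠ ·) a l).foldl δu u = (a :: l).foldl δu u := by
  intro l
  induction l with
  | nil => intro a u; simp [List.destutter']
  | cons b t ih =>
    intro a u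
    by_cases h : a = b
    · subst h
      simp only [List.destutter', ne_eq, not_true_eq_false, if_false, ih]
      simp only [List.foldl_cons]
      rw [hself (δu u a) u a rfl]
    · simp only [List.destutter', ne_eq, h, not_false_eq_true, if_true,
        List.foldl_cons, ih]

/-- If a reward machine satisfies the self-loop condition
(`δu u' σ = u → δu u σ = u`), then the final state reached by processing any trace
equals the final state reached by processing its compression (consecutive duplicates
removed). -/
theorem stmt3 {U Sigma : Type} [DecidableEq Sigma] (δu : U → Sigma → U) (u0 : U)
    (hself : ∀ (u u' : U) (σ : Sigma), δu u' σ = u → δu u σ = u)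
    (τ : List Sigma) :
    τ.foldl δu u0 = (List.destutter (· ≠ ·) τ).foldl δu u0 := by
  cases τ with
  | nil => rfl
  | cons a t => rw [List.destutter, destutter'_foldl δu hself]
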